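/- Let t > (1 + 1/√2)(π - 2) and α(t) = t - π/2 + 1. Among all axis-aligned ellipses {A x² + B y² ≤ 1} with A,B > 0 containing K(t) = {‖p‖ ≤ t, |p_y| ≤ α(t)} and touching it at four symmetric points (so B = (1 - A(t² - α(t)²))/α(t)² and A ≤ 1/t²), the area is minimized by A = B = 1/t², i.e., the circle of radius t. -/

import Mathlib

open Real

private lemma stmt12_aux (t a A : ℝ) (ht0 : 0 < t) (ha0 : 0 < a) (hat : a < t)
    (h2a : t ^ 2 < 2 * a ^ 2) (hA0 : 0 < A) (hA1 : A ≤ 1 / t ^ 2) :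
    π / Real.sqrt ((1 / t ^ 2) * ((1 - (1 / t ^ 2) * (t ^ 2 - a ^ 2)) / a ^ 2))
      ≤ π / Real.sqrt (A * ((1 - A * (t ^ 2 - a ^ 2)) / a ^ 2)) := by
  have ht2 : (0 : ℝ) < t ^ 2 := by positivity
  have ht4 : (0 : ℝ) < t ^ 4 := by positivity
  have hc0 : 0 < t ^ 2 - a ^ 2 := by nlinarith
  have hval : (1 / t ^ 2) * ((1 - (1 / t ^ 2) * (t ^ 2 - a ^ 2)) / a ^ 2) = 1 / t ^ 4 := by
    field_simp; ring
  have hsval : Real.sqrt (1 / t ^ 4) = 1 / t ^ 2 := by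
    rw [show (1 : ℝ) / t ^ 4 = (1 / t ^ 2) ^ 2 by ring]
    exact Real.sqrt_sq (by positivity)
  rw [hval, hsval]
  have hAc1 : A * (t ^ 2 - a ^ 2) < 1 := by
    have h1 : A * (t ^ 2 - a ^ 2) ≤ (1 / t ^ 2) * (t ^ 2 - a ^ 2) :=
      mul_le_mul_of_nonneg_right hA1 hc0.le
    have h2 : (1 / t ^ 2) * (t ^ 2 - a ^ 2) < 1 := by
      rw [div_mul_eq_mul_div, one_mul, div_lt_one ht2]
      nlinarith
    linarith
  have hB0 : 0 < (1 - A * (t ^ 2 - a ^ 2)) / a ^ 2 :=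
    div_pos (by linarith) (by positivity)
  have hg0 : 0 < A * ((1 - A * (t ^ 2 - a ^ 2)) / a ^ 2) := mul_pos hA0 hB0
  have key : 0 ≤ (1 / t ^ 2 - A) * (1 - (t ^ 2 - a ^ 2) * (1 / t ^ 2 + A)) := by
    apply mul_nonneg (by linarith)
    have h4 : (t ^ 2 - a ^ 2) * (1 / t ^ 2 + A) ≤ (t ^ 2 - a ^ 2) * (2 / t ^ 2) := by
      apply mul_le_mul_of_nonneg_left _ hc0.le
      rw [show (2 : ℝ) / t ^ 2 = 1 / t ^ 2 + 1 / t ^ 2 by ring]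
      linarith
    have h5 : (t ^ 2 - a ^ 2) * (2 / t ^ 2) < 1 := by
      rw [mul_div_assoc', div_lt_one ht2]
      nlinarith
    linarith
  have hid : 1 * a ^ 2 - A * (1 - A * (t ^ 2 - a ^ 2)) * t ^ 4
      = t ^ 4 * ((1 / t ^ 2 - A) * (1 - (t ^ 2 - a ^ 2) * (1 / t ^ 2 + A))) := by
    field_simp; ring
  have hmain : A * (1 - A * (t ^ 2 - a ^ 2)) * t ^ 4 ≤ 1 * a ^ 2 := by
    nlinarith [mul_nonneg ht4.le key]
  have hgle : A * ((1 - A * (t ^ 2 - a ^ 2)) / a ^ 2) ≤ 1 / t ^ 4 := by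
    rw [← mul_div_assoc, div_le_div_iff₀ (by positivity) ht4]
    linarith
  have hsle : Real.sqrt (A * ((1 - A * (t ^ 2 - a ^ 2)) / a ^ 2)) ≤ 1 / t ^ 2 := by
    rw [← hsval]; exact Real.sqrt_le_sqrt hgle
  have hsg0 : 0 < Real.sqrt (A * ((1 - A * (t ^ 2 - a ^ 2)) / a ^ 2)) := Real.sqrt_pos.mpr hg0
  exact div_le_div_of_nonneg_left pi_pos.le hsg0 hsle

private lemma stmt12_eq (t a : ℝ) (ht0 : 0 < t) (ha0 : 0 < a) :
    π / Real.sqrt ((1 / t ^ 2) * ((1 - (1 / t ^ 2) * (t ^ 2 - a ^ 2)) / a ^ 2)) = π * t ^ 2 := by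
  have hval : (1 / t ^ 2) * ((1 - (1 / t ^ 2) * (t ^ 2 - a ^ 2)) / a ^ 2) = 1 / t ^ 4 := by
    field_simp; ring
  have hsval : Real.sqrt (1 / t ^ 4) = 1 / t ^ 2 := by
    rw [show (1 : ℝ) / t ^ 4 = (1 / t ^ 2) ^ 2 by ring]
    exact Real.sqrt_sq (by positivity)
  rw [hval, hsval, div_div_eq_mul_div, div_one]

theorem stmt12 (t : ℝ) (ht : (1 + 1 / Real.sqrt 2) * (π - 2) < t) :
    (∀ A : ℝ, 0 < A → A ≤ 1 / t ^ 2 →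
      π / Real.sqrt ((1 / t ^ 2) *
          ((1 - (1 / t ^ 2) * (t ^ 2 - (t - π / 2 + 1) ^ 2)) / (t - π / 2 + 1) ^ 2))
        ≤ π / Real.sqrt (A *
          ((1 - A * (t ^ 2 - (t - π / 2 + 1) ^ 2)) / (t - π / 2 + 1) ^ 2)))
    ∧ π / Real.sqrt ((1 / t ^ 2) *
          ((1 - (1 / t ^ 2) * (t ^ 2 - (t - π / 2 + 1) ^ 2)) / (t - π / 2 + 1) ^ 2))
        = π * t ^ 2 := by
  have hs2 : Real.sqrt 2 ^ 2 = 2 := Real.sq_sqrt (by norm_num)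
  have hs1 : 1 < Real.sqrt 2 := by nlinarith [Real.sqrt_nonneg 2]
  have hpi : 3 < π := pi_gt_three
  have hs0 : (0 : ℝ) < Real.sqrt 2 := by linarith
  have hα0 : 0 < t - π / 2 + 1 := by
    have h1 : 0 < 1 / Real.sqrt 2 := by positivity
    have h2 : π - 2 < (1 + 1 / Real.sqrt 2) * (π - 2) := by nlinarith
    nlinarith
  have ht0 : 0 < t := by nlinarith
  have hsat : t < Real.sqrt 2 * (t - π / 2 + 1) := by
    have h' : (Real.sqrt 2 + 1) * (π - 2) < Real.sqrt 2 * t := by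
      have h2 : (1 + 1 / Real.sqrt 2) * (π - 2) * Real.sqrt 2 < t * Real.sqrt 2 :=
        mul_lt_mul_of_pos_right ht hs0
      have h3 : (1 + 1 / Real.sqrt 2) * (π - 2) * Real.sqrt 2
          = (Real.sqrt 2 + 1) * (π - 2) := by field_simp
      nlinarith
    nlinarith [sq_nonneg (Real.sqrt 2 - 1)]
  have h2α : t ^ 2 < 2 * (t - π / 2 + 1) ^ 2 := by nlinarith
  have hαt : t - π / 2 + 1 < t := by nlinarith
  constructor
  · intro A hA0 hA1
    exact stmt12_aux t (t - π / 2 + 1) A ht0 hα0 hαt h2α hA0 hA1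
  · exact stmt12_eq t (t - π / 2 + 1) ht0 hα0
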